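/- Let H be a complex Hilbert space and A : H →L[ℂ] H a self-adjoint bounded operator. Then A is not hypercyclic: no vector f ∈ H has dense orbit {Aⁿ f : n ∈ ℕ}, provided H ≠ {0}. -/

import Mathlib

private lemma selfadj_key {H : Type*} [NormedAddCommGroup H] [InnerProductSpace ℂ H]
    [CompleteSpace H] (A : H →L[ℂ] H) (hA : IsSelfAdjoint A) (g : H) :
    ‖A g‖^2 ≤ ‖A (A g)‖ * ‖g‖ := by
  have h1 : (‖A g‖:ℝ)^2 = Complex.re (inner ℂ (A g) (A g) : ℂ) := by
    rw [← @inner_self_eq_norm_sq ℂ]; rfl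
  have h2 : (inner ℂ (A g) (A g) : ℂ) = inner ℂ (A (A g)) g := by
    exact_mod_cast (hA.isSymmetric (A g) g).symm
  calc ‖A g‖^2 = Complex.re (inner ℂ (A (A g)) g : ℂ) := by rw [h1, h2]
    _ ≤ ‖(inner ℂ (A (A g)) g : ℂ)‖ := Complex.re_le_norm _
    _ ≤ ‖A (A g)‖ * ‖g‖ := norm_inner_le_norm _ _

theorem stmt_5 {H : Type*} [NormedAddCommGroup H] [InnerProductSpace ℂ H]
    [CompleteSpace H] [Nontrivial H]
    (A : H →L[ℂ] H) (hA : IsSelfAdjoint A) :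
    ¬ ∃ f : H, Dense (Set.range fun n : ℕ => (A ^ n) f) := by
  classical
  rintro ⟨f, hf⟩
  -- H is infinite
  obtain ⟨v, hv⟩ := exists_ne (0 : H)
  have hinf : Infinite H := Infinite.of_injective (fun c : ℂ => c • v)
    (smul_left_injective ℂ hv)
  set a : ℕ → ℝ := fun n => ‖(A ^ n) f‖ with ha
  have hsucc : ∀ n : ℕ, (A ^ (n+1)) f = A ((A ^ n) f) := by
    intro n; rw [pow_succ']; rfl
  have key : ∀ n : ℕ, a (n+1) ^ 2 ≤ a (n+2) * a n := by
    intro n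
    have := selfadj_key A hA ((A ^ n) f)
    rw [← hsucc, ← hsucc] at this
    simpa [ha, ← hsucc, show n+1+1 = n+2 from rfl] using this
  by_cases h0 : ∃ n, (A ^ n) f = 0
  · -- orbit eventually 0, hence finite, cannot be dense in infinite H
    obtain ⟨n, hn⟩ := h0
    have hz : ∀ m, n ≤ m → (A ^ m) f = 0 := by
      intro m hm
      obtain ⟨k, rfl⟩ := Nat.exists_eq_add_of_le hm
      rw [add_comm, pow_add, ContinuousLinearMap.mul_apply, hn, map_zero]
    set F : Set H := insert (0:H) ((fun k : ℕ => (A ^ k) f) '' Set.Iio n) with hF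
    have hsub : Set.range (fun m : ℕ => (A ^ m) f) ⊆ F := by
      rintro _ ⟨m, rfl⟩
      by_cases hm : m < n
      · exact Set.mem_insert_iff.mpr (Or.inr ⟨m, hm, rfl⟩)
      · exact Set.mem_insert_iff.mpr (Or.inl (hz m (le_of_not_gt hm)))
    have hfin : F.Finite := ((Set.finite_Iio n).image _).insert 0
    have : (Set.univ : Set H) ⊆ _ := hf.closure_eq ▸ closure_mono hsub
    rw [hfin.isClosed.closure_eq] at this
    exact Set.infinite_univ (Set.Finite.subset hfin this)
  · push_neg at h0
    have hpos : ∀ n, 0 < a n := fun n => norm_pos_iff.mpr (h0 n)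
    by_cases hb : ∃ N, a N ≤ a (N+1)
    · -- norms eventually bounded below, orbit stays away from 0
      obtain ⟨N, hN⟩ := hb
      have mono : ∀ m, N ≤ m → a m ≤ a (m+1) := by
        intro m hm
        induction m, hm using Nat.le_induction with
        | base => exact hN
        | succ m hm ih =>
          nlinarith [key m, hpos m, hpos (m+1), hpos (m+2)]
      have monoge : ∀ m, N ≤ m → a N ≤ a m := by
        intro m hm
        induction m, hm using Nat.le_induction with
        | base => exact le_rfl
        | succ m hm ih => exact ih.trans (mono m hm)
      set ε := (Finset.range (N+1)).inf' (by simp) a with hε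
      have hεpos : 0 < ε := by
        rw [hε, Finset.lt_inf'_iff]
        exact fun i _ => hpos i
      have hlb : ∀ m, ε ≤ a m := by
        intro m
        rcases le_or_gt m N with hm | hm
        · exact Finset.inf'_le a (by simp [Nat.lt_succ_iff, hm])
        · exact (Finset.inf'_le a (by simp)).trans (monoge m hm.le)
      obtain ⟨b, ⟨m, rfl⟩, hbd⟩ := Metric.mem_closure_iff.mp (hf 0) ε hεpos
      rw [dist_comm, dist_zero_right] at hbd
      exact absurd hbd (not_lt.mpr (hlb m))
    · -- norms decreasing, orbit bounded
      push_neg at hb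
      have hbd : ∀ m, a m ≤ a 0 := by
        intro m
        induction m with
        | zero => exact le_rfl
        | succ m ih => exact ((hb m).le).trans ih
      set x : H := ((a 0 + 2) / ‖v‖) • v with hx
      have hnx : ‖x‖ = a 0 + 2 := by
        have h2 : (0:ℝ) < a 0 + 2 := by have := hpos 0; linarith
        rw [hx, norm_smul, Real.norm_eq_abs, abs_div, abs_of_pos h2, abs_of_pos (norm_pos_iff.mpr hv),
          div_mul_cancel₀ _ (norm_ne_zero_iff.mpr hv)]
      obtain ⟨b, ⟨m, rfl⟩, hbd2⟩ := Metric.mem_closure_iff.mp (hf x) 1 one_pos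
      have : a 0 + 2 - a m ≤ dist x ((A ^ m) f) := by
        calc a 0 + 2 - a m = ‖x‖ - ‖(A ^ m) f‖ := by rw [hnx]
          _ ≤ ‖x - (A ^ m) f‖ := norm_sub_norm_le _ _
          _ = dist x ((A ^ m) f) := (dist_eq_norm _ _).symm
      have := hbd m
      linarith
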